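/- Let μ be a probability measure on a measurable space X, let A : X → 𝒜 be a measurable map to a finite set of groups, and let f : X → (0,∞) be measurable with 0 < ∫ f^w dμ < ∞. Define the tilted measure μ_w by dμ_w = f^w / (∫ f^w dμ) dμ. If for all groups a, a' the conditional laws of f given A = a and A = a' under μ coincide (and μ(A = a) > 0 for all a), then for all a, a': μ_w(A = a) / μ_w(A = a') = μ(A = a) / μ(A = a'). -/

import Mathlib

open MeasureTheory ProbabilityTheory
open scoped ENNReal

/-- The `f^w`-tilted (guided) measure `μ_w` with `dμ_w = f^w dμ / ∫ f^w dμ`. -/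
noncomputable def tilt {X : Type} [MeasurableSpace X]
    (μ : Measure X) (f : X → ℝ) (w : ℝ) : Measure X :=
  (∫⁻ x, ENNReal.ofReal (f x ^ w) ∂μ)⁻¹ • μ.withDensity (fun x => ENNReal.ofReal (f x ^ w))

/-- SDP preserves the group ratio of the tilted (target) distribution: if the guidance
function `f` has the same conditional law in every group, then exponential tilting by
`f^w` preserves the ratio of group probabilities. -/
theorem tilt_preserves_group_ratio
    {X : Type} [MeasurableSpace X] (μ : Measure X) [IsProbabilityMeasure μ]
    {𝒜 : Type} [Fintype 𝒜] [MeasurableSpace 𝒜] [MeasurableSingletonClass 𝒜]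
    (A : X → 𝒜) (hA : Measurable A) (hpos : ∀ a, μ (A ⁻¹' {a}) ≠ 0)
    (f : X → ℝ) (hf : Measurable f) (hfpos : ∀ x, 0 < f x)
    (w : ℝ)
    (hint : Integrable (fun x => f x ^ w) μ)
    (hIpos : 0 < ∫ x, f x ^ w ∂μ)
    (hcond : ∀ a a' : 𝒜,
      (ProbabilityTheory.cond μ (A ⁻¹' {a})).map f
        = (ProbabilityTheory.cond μ (A ⁻¹' {a'})).map f) :
    ∀ a a' : 𝒜,
      tilt μ f w (A ⁻¹' {a}) / tilt μ f w (A ⁻¹' {a'})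
        = μ (A ⁻¹' {a}) / μ (A ⁻¹' {a'}) := by
  intro a a'
  set g : X → ℝ≥0∞ := fun x => ENNReal.ofReal (f x ^ w) with hg
  have hgmeas : Measurable g := (hf.pow measurable_const).ennreal_ofReal
  have hgpos : ∀ x, 0 < g x := fun x =>
    ENNReal.ofReal_pos.mpr (Real.rpow_pos_of_pos (hfpos x) w)
  set Z : ℝ≥0∞ := ∫⁻ x, g x ∂μ with hZ
  -- Z is finite and nonzero
  have hZfin : Z ≠ ∞ := by
    have := hint.hasFiniteIntegral
    rw [hasFiniteIntegral_iff_ofReal] at this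
    · exact this.ne
    · exact Filter.Eventually.of_forall fun x => (Real.rpow_pos_of_pos (hfpos x) w).le
  have hZint : ∫ x, f x ^ w ∂μ = Z.toReal := by
    rw [hZ, integral_eq_lintegral_of_nonneg_ae
      (Filter.Eventually.of_forall fun x => (Real.rpow_pos_of_pos (hfpos x) w).le)
      hint.aestronglyMeasurable]
  have hZne : Z ≠ 0 := by
    intro h
    rw [hZint, h] at hIpos
    simp at hIpos
  -- measurable sets
  have hma : MeasurableSet (A ⁻¹' {a}) := hA (measurableSet_singleton a)
  have hma' : MeasurableSet (A ⁻¹' {a'}) := hA (measurableSet_singleton a')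
  -- key: set integral of g over a group = μ(group) * c where c is common
  have key : ∀ b : 𝒜, ∫⁻ x in A ⁻¹' {b}, g x ∂μ
      = μ (A ⁻¹' {b}) * ∫⁻ x, g x ∂(ProbabilityTheory.cond μ (A ⁻¹' {b})) := by
    intro b
    rw [ProbabilityTheory.cond, lintegral_smul_measure]
    rw [smul_eq_mul, ← mul_assoc, ENNReal.mul_inv_cancel (hpos b) (measure_ne_top μ _), one_mul]
  set c : 𝒜 → ℝ≥0∞ := fun b => ∫⁻ x, g x ∂(ProbabilityTheory.cond μ (A ⁻¹' {b})) with hc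
  have hceq : c a = c a' := by
    have h1 : ∀ b : 𝒜, c b = ∫⁻ y, ENNReal.ofReal (y ^ w)
        ∂((ProbabilityTheory.cond μ (A ⁻¹' {b})).map f) := by
      intro b
      exact (lintegral_map (measurable_id.pow measurable_const).ennreal_ofReal hf).symm
    rw [h1 a, h1 a', hcond a a']
  -- c a is nonzero and finite
  have hcfin : c a ≠ ∞ := by
    have : μ (A ⁻¹' {a}) * c a = ∫⁻ x in A ⁻¹' {a}, g x ∂μ := (key a).symm
    intro h
    rw [h, ENNReal.mul_top (hpos a)] at this
    have hle : ∫⁻ x in A ⁻¹' {a}, g x ∂μ ≤ Z := setLIntegral_le_lintegral _ _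
    rw [← this] at hle
    exact hZfin (top_le_iff.mp hle)
  have hcne : c a ≠ 0 := by
    intro h
    rw [hc] at h
    simp only at h
    rw [lintegral_eq_zero_iff hgmeas] at h
    have hcp : ProbabilityTheory.cond μ (A ⁻¹' {a}) Set.univ ≠ 0 := by
      have : IsProbabilityMeasure (ProbabilityTheory.cond μ (A ⁻¹' {a})) :=
        ProbabilityTheory.cond_isProbabilityMeasure (hpos a)
      simp [this.measure_univ]
    have : ∀ᵐ x ∂(ProbabilityTheory.cond μ (A ⁻¹' {a})), False := by
      filter_upwards [h] with x hx
      exact (hgpos x).ne' hx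
    rw [ae_iff] at this
    simp only [not_false_eq_true, Set.setOf_true] at this
    exact hcp this
  -- compute the tilted measures
  have htilt : ∀ b : 𝒜, tilt μ f w (A ⁻¹' {b})
      = Z⁻¹ * (μ (A ⁻¹' {b}) * c b) := by
    intro b
    rw [tilt, Measure.smul_apply, smul_eq_mul,
      withDensity_apply _ (hA (measurableSet_singleton b)), key b]
  rw [htilt a, htilt a', hceq]
  have hk0 : Z⁻¹ ≠ 0 := ENNReal.inv_ne_zero.mpr hZfin
  have hktop : Z⁻¹ ≠ ∞ := ENNReal.inv_ne_top.mpr hZne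
  calc Z⁻¹ * (μ (A ⁻¹' {a}) * c a') / (Z⁻¹ * (μ (A ⁻¹' {a'}) * c a'))
      = (Z⁻¹ * c a') * μ (A ⁻¹' {a}) / ((Z⁻¹ * c a') * μ (A ⁻¹' {a'})) := by
        ring_nf
    _ = μ (A ⁻¹' {a}) / μ (A ⁻¹' {a'}) := by
        rw [← hceq] at *
        exact ENNReal.mul_div_mul_left _ _ (mul_ne_zero hk0 hcne)
          (ENNReal.mul_ne_top hktop hcfin)
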